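/- Let n ≥ 3 and define S̃(x₀,x₁,x₂) as in the Stiefel manifold scalar curvature formula: S̃(x₀,x₁,x₂) = (x₀ x₁^{n-1} x₂^{n-1})^{1/(2n-1)} · [ (n-1)((n-1)/x₁ + (n-1)/x₂ + 1/x₀) - ((n-1)/2)(x₁/(x₂x₀) + x₂/(x₁x₀) + x₀/(x₁x₂)) ]. Then ∂²S̃/∂x₁² evaluated at (2(n-1), n, n) is strictly positive. -/

import Mathlib

/-- The normalized total scalar curvature (up to constant) of invariant metrics
on the Stiefel manifold `SO(n+1)/SO(n-1)`. -/
noncomputable def stiefelS (n : ℕ) (x₀ x₁ x₂ : ℝ) : ℝ :=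
  (x₀ * x₁ ^ (n - 1) * x₂ ^ (n - 1)) ^ ((1 : ℝ) / (2 * n - 1)) *
    (((n : ℝ) - 1) * (((n : ℝ) - 1) / x₁ + ((n : ℝ) - 1) / x₂ + 1 / x₀)
      - (((n : ℝ) - 1) / 2) * (x₁ / (x₂ * x₀) + x₂ / (x₁ * x₀) + x₀ / (x₁ * x₂)))

set_option maxHeartbeats 1600000 in
theorem stiefel_second_deriv_pos (n : ℕ) (hn : 3 ≤ n) :
    0 < iteratedDeriv 2 (fun x₁ : ℝ => stiefelS n (2 * ((n : ℝ) - 1)) x₁ (n : ℝ)) (n : ℝ) := by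
  have hN : (3:ℝ) ≤ (n:ℝ) := by exact_mod_cast hn
  set N : ℝ := (n : ℝ) with hNdef
  have hNpos : 0 < N := by linarith
  have hN1 : 0 < N - 1 := by linarith
  have h2N1 : 0 < 2*N - 1 := by linarith
  set q : ℝ := (N - 1) / (2*N - 1) with hq
  set A : ℝ := (N-1)^2/N + 1/2 with hA
  set B : ℝ := (N-1)^3/N - N/4 with hB
  set D : ℝ := -(1/(4*N)) with hD
  set K : ℝ := (2*(N-1) * N^(n-1)) ^ ((1:ℝ)/(2*N-1)) with hK
  have hKpos : 0 < K := Real.rpow_pos_of_pos (by positivity) _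
  clear_value q A B D K
  have hcast : ((n - 1 : ℕ) : ℝ) = N - 1 := by
    rw [hNdef]; push_cast [Nat.cast_sub (by omega : 1 ≤ n)]; ring
  -- the model function
  set φ : ℝ → ℝ := fun x => K * (x ^ q * (A + B * x⁻¹ + D * x)) with hφ
  have heq : (fun x₁ : ℝ => stiefelS n (2 * (N - 1)) x₁ N) =ᶠ[nhds N] φ := by
    filter_upwards [Ioi_mem_nhds hNpos] with x hx
    have hxpos : (0:ℝ) < x := hx
    simp only [stiefelS, hφ, ← hNdef]
    rw [show 2*(N-1) * x ^ (n-1) * N ^ (n-1) = (2*(N-1) * N^(n-1)) * x^(n-1) by ring,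
      Real.mul_rpow (by positivity) (by positivity),
      ← Real.rpow_natCast x (n-1), ← Real.rpow_mul hxpos.le, hcast, ← hK,
      show (N-1) * ((1:ℝ)/(2*N-1)) = q by rw [hq]; field_simp]
    have hg : ((N:ℝ) - 1) * ((N - 1) / x + (N - 1) / N + 1 / (2*(N-1)))
        - ((N - 1) / 2) * (x / (N * (2*(N-1))) + N / (x * (2*(N-1))) + 2*(N-1) / (x * N))
        = A + B * x⁻¹ + D * x := by
      rw [hA, hB, hD]
      field_simp
      ring
    rw [hg]
    ring
  -- first derivative of the model
  set F1 : ℝ → ℝ := fun x =>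
    K * (q * x ^ (q-1) * (A + B * x⁻¹ + D * x) + x ^ q * (B * -(x^2)⁻¹ + D)) with hF1
  have hφ' : ∀ x : ℝ, 0 < x → HasDerivAt φ (F1 x) x := by
    intro x hx
    have hu : HasDerivAt (fun x : ℝ => x ^ q) (q * x ^ (q-1)) x := by
      simpa using Real.hasDerivAt_rpow_const (Or.inl hx.ne')
    have hv : HasDerivAt (fun x : ℝ => A + B * x⁻¹ + D * x) (B * -(x^2)⁻¹ + D) x := by
      have h1 := ((hasDerivAt_inv hx.ne').const_mul B).const_add A
      have h2 := (hasDerivAt_id x).const_mul D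
      exact (h1.add h2).congr_deriv (by ring)
    exact (hu.mul hv).const_mul K
  have hd1 : deriv (fun x₁ : ℝ => stiefelS n (2 * (N - 1)) x₁ N) =ᶠ[nhds N] F1 := by
    have h1 := heq.deriv
    refine h1.trans ?_
    filter_upwards [Ioi_mem_nhds hNpos] with x hx
    exact (hφ' x hx).deriv
  -- second derivative of the model at N
  have hNne : N ≠ 0 := hNpos.ne'
  have hu1 : HasDerivAt (fun x : ℝ => q * x ^ (q-1)) (q * ((q-1) * N ^ (q-1-1))) N := by
    exact (Real.hasDerivAt_rpow_const (Or.inl hNne)).const_mul q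
  have hv : HasDerivAt (fun x : ℝ => A + B * x⁻¹ + D * x) (B * -(N^2)⁻¹ + D) N := by
    have h1 := ((hasDerivAt_inv hNne).const_mul B).const_add A
    have h2 := (hasDerivAt_id N).const_mul D
    exact (h1.add h2).congr_deriv (by ring)
  have hu : HasDerivAt (fun x : ℝ => x ^ q) (q * N ^ (q-1)) N := by
    simpa using Real.hasDerivAt_rpow_const (Or.inl hNne)
  have hw : HasDerivAt (fun x : ℝ => B * -(x^2)⁻¹ + D) (B * (2 * N / (N^2)^2)) N := by
    have h := (((hasDerivAt_pow 2 N).inv (by positivity)).neg.const_mul B).add_const D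
    exact h.congr_deriv (by push_cast; ring)
  have hF2 : HasDerivAt F1
      (K * ((q * ((q-1) * N ^ (q-1-1)) * (A + B * N⁻¹ + D * N)
          + q * N ^ (q-1) * (B * -(N^2)⁻¹ + D))
        + (q * N ^ (q-1) * (B * -(N^2)⁻¹ + D) + N ^ q * (B * (2 * N / (N^2)^2))))) N := by
    exact ((hu1.mul hv).add (hu.mul hw)).const_mul K
  have hval : iteratedDeriv 2 (fun x₁ : ℝ => stiefelS n (2 * (N - 1)) x₁ N) N
      = K * ((q * ((q-1) * N ^ (q-1-1)) * (A + B * N⁻¹ + D * N)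
          + q * N ^ (q-1) * (B * -(N^2)⁻¹ + D))
        + (q * N ^ (q-1) * (B * -(N^2)⁻¹ + D) + N ^ q * (B * (2 * N / (N^2)^2)))) := by
    rw [iteratedDeriv_succ, iteratedDeriv_one, hd1.deriv_eq, hF2.deriv]
  rw [show ((n:ℝ)) = N from rfl] at *
  rw [hval]
  -- rewrite the rpow powers in terms of t := N ^ (q-2)
  have e0 : q - 1 - 1 = q - 2 := by ring
  have e1 : N ^ (q-1) = N ^ (q-2) * N := by
    rw [show q - 1 = (q-2) + 1 by ring, Real.rpow_add hNpos, Real.rpow_one]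
  have e2 : N ^ q = N ^ (q-2) * N^2 := by
    rw [show q = (q-2) + 2 by ring, Real.rpow_add hNpos]
    norm_num
  have htpos : 0 < N ^ (q-2) := Real.rpow_pos_of_pos hNpos _
  rw [e0, e1, e2]
  have hP : 0 < q * (q-1) * (A + B * N⁻¹ + D * N)
      + 2 * (q * N) * (B * -(N^2)⁻¹ + D) + N^2 * (B * (2 * N / (N^2)^2)) := by
    have key : q * (q-1) * (A + B * N⁻¹ + D * N)
        + 2 * (q * N) * (B * -(N^2)⁻¹ + D) + N^2 * (B * (2 * N / (N^2)^2))
        = (2*N^3 - 8*N^2 + 7*N - 2) / (2*N*(2*N-1)) := by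
      rw [hq, hA, hB, hD]
      have h2' : N*2-1 ≠ 0 := by linarith
      field_simp
      ring
    rw [key]
    have hnum : 0 < 2*N^3 - 8*N^2 + 7*N - 2 := by
      nlinarith [mul_nonneg (mul_nonneg (by linarith : (0:ℝ) ≤ N-3) (by linarith : (0:ℝ) ≤ N-3))
        (by linarith : (0:ℝ) ≤ N-3), sq_nonneg (N-3)]
    exact div_pos hnum (mul_pos (by linarith) h2N1)
  have final := mul_pos hKpos (mul_pos htpos hP)
  exact lt_of_lt_of_eq final (by ring)
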